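/- Let d ≥ 1 and 0 < c ≤ 1. Let A be the set of points x of the rescaled integer lattice (c·d^(−1/2))·ℤᵈ ⊆ ℝᵈ whose Euclidean distance to the unit sphere is at most c/2, i.e., |‖x‖ − 1| ≤ c/2. Then A is finite and its cardinality is at most 2ᵈ · ω_d · d^(d/2) · c^(1−d), where ω_d denotes the Lebesgue volume of the unit ball in ℝᵈ. -/

import Mathlib

open MeasureTheory Metric Set ENNReal


lemma binom_aux {c : ℝ} (hc0 : 0 ≤ c) (hc1 : c ≤ 1) :
    ∀ d : ℕ, 1 ≤ d →
      (1 + c) ^ d + (1 - c) ^ d ≤ 2 ^ d ∧ (1 + c) ^ d - (1 - c) ^ d ≤ 2 ^ d * c := by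
  intro d hd
  induction d, hd using Nat.le_induction with
  | base => constructor <;> simp <;> nlinarith
  | succ n hn ih =>
    obtain ⟨h1, h2⟩ := ih
    have h2n : (0:ℝ) ≤ 2 ^ n := by positivity
    have hcc : c * c ≤ 1 := by nlinarith
    constructor
    · have e : (1 + c) ^ (n + 1) + (1 - c) ^ (n + 1)
        = ((1 + c) ^ n + (1 - c) ^ n) + c * ((1 + c) ^ n - (1 - c) ^ n) := by ring
      rw [e, pow_succ]
      nlinarith [mul_le_mul_of_nonneg_left h2 hc0, mul_le_mul_of_nonneg_left hcc h2n]
    · have e : (1 + c) ^ (n + 1) - (1 - c) ^ (n + 1)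
        = ((1 + c) ^ n - (1 - c) ^ n) + c * ((1 + c) ^ n + (1 - c) ^ n) := by ring
      rw [e, pow_succ]
      nlinarith [mul_le_mul_of_nonneg_left h1 hc0]

lemma coord_le_norm {d : ℕ} (x : EuclideanSpace ℝ (Fin d)) (i : Fin d) : |x i| ≤ ‖x‖ := by
  rw [EuclideanSpace.norm_eq]
  have h1 : |x i| = Real.sqrt (‖x i‖ ^ 2) := by
    rw [Real.sqrt_sq_eq_abs]; simp [Real.norm_eq_abs]
  rw [h1]
  apply Real.sqrt_le_sqrt
  exact Finset.single_le_sum (f := fun j => ‖x j‖ ^ 2) (fun j _ => by positivity)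
    (Finset.mem_univ i)

/-- Counting estimate in the proof of the covering lemma (Lemma A.2): the set of
points of the lattice `(c d^{-1/2}) ℤᵈ` at distance at most `c/2` from the unit
sphere is finite, of cardinality at most `2ᵈ ω_d d^{d/2} c^{1-d}`, where `ω_d` is
the volume of the unit ball. -/
theorem stmt_13 (d : ℕ) (hd : 1 ≤ d) (c : ℝ) (hc0 : 0 < c) (hc1 : c ≤ 1)
    (A : Set (EuclideanSpace ℝ (Fin d)))
    (hA : A = {x : EuclideanSpace ℝ (Fin d) |
      (∀ i : Fin d, ∃ k : ℤ, x i = c / Real.sqrt d * (k : ℝ)) ∧ |‖x‖ - 1| ≤ c / 2}) :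
    A.Finite ∧
      (A.ncard : ℝ) ≤ 2 ^ d *
        (volume (Metric.ball (0 : EuclideanSpace ℝ (Fin d)) 1)).toReal *
        (d : ℝ) ^ ((d : ℝ) / 2) * c ^ (1 - (d : ℝ)) := by
  have hdR : (0:ℝ) < d := by exact_mod_cast hd
  have hsd : (0:ℝ) < Real.sqrt d := Real.sqrt_pos.mpr hdR
  set s : ℝ := c / Real.sqrt d with hs_def
  have hs0 : 0 < s := div_pos hc0 hsd
  have hsds : Real.sqrt d * s = c := by rw [hs_def]; field_simp
  -- norm bound for points of A
  have hnormA : ∀ x ∈ A, 1 - c / 2 ≤ ‖x‖ ∧ ‖x‖ ≤ 1 + c / 2 := by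
    intro x hx
    rw [hA] at hx
    have := abs_le.mp hx.2
    constructor <;> linarith [this.1, this.2]
  -- Finiteness
  have hfin : A.Finite := by
    set N : ℤ := ⌈2 / s⌉ with hN
    have hsub : A ⊆ (fun k : Fin d → ℤ =>
        (WithLp.toLp 2 (fun i => s * (k i : ℝ)) : EuclideanSpace ℝ (Fin d))) ''
        (Set.pi Set.univ fun _ : Fin d => Set.Icc (-N) N) := by
      intro x hx
      obtain ⟨h1, -⟩ := hA ▸ hx
      choose k hk using h1
      refine ⟨k, ?_, ?_⟩
      · intro i _
        have hxi : |x i| ≤ 2 := by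
          have := coord_le_norm x i
          have h2 := (hnormA x hx).2
          linarith
        have hki : |(k i : ℝ)| ≤ 2 / s := by
          rw [hk i] at hxi
          rw [abs_mul, abs_of_pos hs0] at hxi
          rw [le_div_iff₀ hs0]
          linarith [hxi]
        have : |(k i : ℝ)| ≤ (N : ℝ) := hki.trans (Int.le_ceil _)
        have : |k i| ≤ N := by exact_mod_cast this
        exact ⟨neg_le_of_abs_le this, le_of_abs_le this⟩
      · ext i
        exact (hk i).symm
    exact Set.Finite.subset (Set.Finite.image _
      (Set.Finite.pi fun _ => Set.finite_Icc _ _)) hsub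
  refine ⟨hfin, ?_⟩
  -- the cubes
  set Q : EuclideanSpace ℝ (Fin d) → Set (EuclideanSpace ℝ (Fin d)) :=
    fun x => (MeasurableEquiv.toLp 2 (Fin d → ℝ)).symm ⁻¹'
      (Set.pi Set.univ fun i => Set.Ico (x i - s / 2) (x i + s / 2)) with hQ
  have hmemQ : ∀ x y, y ∈ Q x ↔ ∀ i, x i - s / 2 ≤ y i ∧ y i < x i + s / 2 := by
    intro x y
    constructor
    · intro h i
      exact h i (Set.mem_univ i)
    · intro h i _
      exact h i
  have hQmeas : ∀ x, MeasurableSet (Q x) := fun x =>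
    (MeasurableSet.univ_pi fun i => measurableSet_Ico).preimage
      (MeasurableEquiv.toLp 2 (Fin d → ℝ)).symm.measurable
  have hQvol : ∀ x, volume (Q x) = ENNReal.ofReal (s ^ d) := by
    intro x
    rw [hQ]
    rw [(EuclideanSpace.volume_preserving_symm_measurableEquiv_toLp (Fin d)).measure_preimage
      ((MeasurableSet.univ_pi fun i => measurableSet_Ico).nullMeasurableSet)]
    rw [volume_pi_pi]
    simp only [Real.volume_Ico]
    have : ∀ i : Fin d, ENNReal.ofReal (x i + s / 2 - (x i - s / 2)) = ENNReal.ofReal s := by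
      intro i; congr 1; ring
    rw [Finset.prod_congr rfl (fun i _ => this i), Finset.prod_const,
      Finset.card_univ, Fintype.card_fin, ENNReal.ofReal_pow hs0.le]
  -- cubes centered at A are pairwise disjoint
  have hdisj : (A : Set _).PairwiseDisjoint Q := by
    intro x hx y hy hxy
    show Disjoint (Q x) (Q y)
    rw [Set.disjoint_left]
    intro z hzx hzy
    obtain ⟨hx1, -⟩ := hA ▸ hx
    obtain ⟨hy1, -⟩ := hA ▸ hy
    have : ∃ i, x i ≠ y i := by
      by_contra h
      push_neg at h
      exact hxy (PiLp.ext h)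
    obtain ⟨i, hi⟩ := this
    obtain ⟨a, ha⟩ := hx1 i
    obtain ⟨b, hb⟩ := hy1 i
    have hab : a ≠ b := by
      intro h; apply hi; rw [ha, hb, h]
    have h1 : s ≤ |x i - y i| := by
      rw [ha, hb, ← mul_sub, abs_mul, abs_of_pos hs0, ← Int.cast_sub]
      have : (1:ℝ) ≤ |((a - b : ℤ) : ℝ)| := by
        rw [← Int.cast_abs]
        exact_mod_cast Int.one_le_abs (sub_ne_zero.mpr hab)
      nlinarith
    have h2 := (hmemQ x z).mp hzx i
    have h3 := (hmemQ y z).mp hzy i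
    have h4 : |x i - y i| < s := by
      rw [abs_sub_lt_iff]
      constructor <;> linarith [h2.1, h2.2, h3.1, h3.2]
    linarith
  -- cubes lie in the shell
  have hshell : ∀ x ∈ A, Q x ⊆ closedBall (0 : EuclideanSpace ℝ (Fin d)) (1 + c)
      \ ball (0 : EuclideanSpace ℝ (Fin d)) (1 - c) := by
    intro x hx y hy
    have hdist : ‖y - x‖ ≤ c / 2 := by
      rw [EuclideanSpace.norm_eq]
      have hb : ∀ i : Fin d, ‖(y - x) i‖ ^ 2 ≤ (s / 2) ^ 2 := by
        intro i
        have h := (hmemQ x y).mp hy i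
        have hyx : (y - x) i = y i - x i := rfl
        rw [hyx, Real.norm_eq_abs, sq_abs]
        nlinarith [h.1, h.2]
      have hsum : ∑ i : Fin d, ‖(y - x) i‖ ^ 2 ≤ d * (s / 2) ^ 2 := by
        calc ∑ i : Fin d, ‖(y - x) i‖ ^ 2 ≤ ∑ _i : Fin d, (s / 2) ^ 2 :=
              Finset.sum_le_sum fun i _ => hb i
          _ = d * (s / 2) ^ 2 := by rw [Finset.sum_const, Finset.card_univ, Fintype.card_fin, nsmul_eq_mul]
      calc Real.sqrt (∑ i : Fin d, ‖(y - x) i‖ ^ 2) ≤ Real.sqrt ((d : ℝ) * (s / 2) ^ 2) :=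
            Real.sqrt_le_sqrt hsum
        _ = Real.sqrt d * (s / 2) := by
            rw [Real.sqrt_mul hdR.le, Real.sqrt_sq (by positivity)]
        _ = c / 2 := by rw [← hsds]; ring
    have hn := hnormA x hx
    have hy1 : ‖y‖ ≤ 1 + c := by
      have hxyx : x + (y - x) = y := by abel
      calc ‖y‖ = ‖x + (y - x)‖ := by rw [hxyx]
        _ ≤ ‖x‖ + ‖y - x‖ := norm_add_le _ _
        _ ≤ (1 + c / 2) + c / 2 := add_le_add hn.2 hdist
        _ = 1 + c := by ring
    have hy2 : 1 - c ≤ ‖y‖ := by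
      have : ‖x‖ - ‖y‖ ≤ ‖x - y‖ := norm_sub_norm_le _ _
      have hxy : ‖x - y‖ = ‖y - x‖ := norm_sub_rev _ _
      linarith [hn.1]
    constructor
    · rw [mem_closedBall_zero_iff]; exact hy1
    · rw [mem_ball_zero_iff]; push_neg; exact hy2
  -- measure computation
  set ω : ℝ≥0∞ := volume (ball (0 : EuclideanSpace ℝ (Fin d)) 1) with hω
  haveI : Nontrivial (EuclideanSpace ℝ (Fin d)) := by
    apply Module.nontrivial_of_finrank_pos (R := ℝ)
    rw [finrank_euclideanSpace_fin]; exact hd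
  have hshellvol : volume (closedBall (0 : EuclideanSpace ℝ (Fin d)) (1 + c)
      \ ball (0 : EuclideanSpace ℝ (Fin d)) (1 - c)) ≤ ENNReal.ofReal (2 ^ d * c) * ω := by
    have hsub : ball (0 : EuclideanSpace ℝ (Fin d)) (1 - c)
        ⊆ closedBall (0 : EuclideanSpace ℝ (Fin d)) (1 + c) :=
      (ball_subset_ball (by linarith)).trans ball_subset_closedBall
    rw [measure_diff hsub measurableSet_ball.nullMeasurableSet measure_ball_lt_top.ne]
    rw [Measure.addHaar_closedBall volume _ (by linarith : (0:ℝ) ≤ 1 + c),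
      Measure.addHaar_ball volume _ (by linarith : (0:ℝ) ≤ 1 - c),
      finrank_euclideanSpace_fin]
    rw [tsub_le_iff_right, ← add_mul, ← ENNReal.ofReal_add (by positivity) (pow_nonneg (by linarith) d)]
    apply mul_le_mul_left
    apply ENNReal.ofReal_le_ofReal
    have := (binom_aux hc0.le hc1 d hd).2
    linarith
  -- counting
  set T : Finset (EuclideanSpace ℝ (Fin d)) := hfin.toFinset with hT
  have hTA : ∀ x ∈ T, x ∈ A := fun x hx => hfin.mem_toFinset.mp hx
  have hcount : (T.card : ℝ≥0∞) * ENNReal.ofReal (s ^ d) ≤ ENNReal.ofReal (2 ^ d * c) * ω := by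
    have h1 : volume (⋃ x ∈ T, Q x) = ∑ x ∈ T, volume (Q x) :=
      measure_biUnion_finset (hdisj.subset (fun x hx => hTA x hx)) fun x _ => hQmeas x
    have h2 : ∑ x ∈ T, volume (Q x) = (T.card : ℝ≥0∞) * ENNReal.ofReal (s ^ d) := by
      rw [Finset.sum_congr rfl fun x _ => hQvol x, Finset.sum_const, nsmul_eq_mul]
    have h3 : (⋃ x ∈ T, Q x) ⊆ closedBall (0 : EuclideanSpace ℝ (Fin d)) (1 + c)
        \ ball (0 : EuclideanSpace ℝ (Fin d)) (1 - c) := by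
      apply Set.iUnion₂_subset
      intro x hx
      exact hshell x (hTA x hx)
    calc (T.card : ℝ≥0∞) * ENNReal.ofReal (s ^ d) = volume (⋃ x ∈ T, Q x) := by
          rw [h1, h2]
      _ ≤ _ := (measure_mono h3).trans hshellvol
  -- pass to reals
  have hωfin : ω ≠ ⊤ := measure_ball_lt_top.ne
  have hreal : (T.card : ℝ) * s ^ d ≤ 2 ^ d * c * ω.toReal := by
    have h := ENNReal.toReal_mono (by
      exact ENNReal.mul_ne_top ENNReal.ofReal_ne_top hωfin) hcount
    rw [ENNReal.toReal_mul, ENNReal.toReal_mul, ENNReal.toReal_ofReal (by positivity),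
      ENNReal.toReal_ofReal (by positivity), ENNReal.toReal_natCast] at h
    exact h
  have hcard : (A.ncard : ℝ) = (T.card : ℝ) := by
    rw [Set.ncard_eq_toFinset_card A hfin]
  rw [hcard]
  -- final algebra
  have hωr : (0:ℝ) ≤ ω.toReal := ENNReal.toReal_nonneg
  have hrw1 : (d : ℝ) ^ ((d : ℝ) / 2) = Real.sqrt d ^ d := by
    rw [Real.sqrt_eq_rpow, ← Real.rpow_natCast ((d:ℝ) ^ ((1:ℝ)/2)) d,
      ← Real.rpow_mul hdR.le]
    norm_num
    ring_nf
  have hrw2 : c ^ (1 - (d : ℝ)) = c / c ^ d := by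
    rw [Real.rpow_sub hc0, Real.rpow_one, Real.rpow_natCast]
  rw [hrw1, hrw2]
  have hsd' : (0:ℝ) < Real.sqrt d ^ d := by positivity
  have hcd : (0:ℝ) < c ^ d := by positivity
  have hspow : s ^ d = c ^ d / Real.sqrt d ^ d := by
    rw [hs_def, div_pow]
  rw [hspow] at hreal
  have hX : (0:ℝ) < c ^ d / Real.sqrt d ^ d := by positivity
  calc (T.card : ℝ) ≤ (2 ^ d * c * ω.toReal) / (c ^ d / Real.sqrt d ^ d) :=
        (le_div_iff₀ hX).mpr hreal
    _ = 2 ^ d * ω.toReal * Real.sqrt d ^ d * (c / c ^ d) := by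
        field_simp
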